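/- Let σ be a type of states, Λ a type of labels, and step : Λ → σ → σ → Prop a labeled transition relation, with runs over label lists defined inductively as usual. Say labels r and r' are sequentially independent if whenever step r a b and step r' b c, there exists d with step r' a d and step r d c. Let r_sink be a label and w a list of labels such that every label occurring in w is sequentially independent from r_sink (i.e., for each r in w, the pair (r, r_sink) satisfies the swap property). If there exist states b, c, d with a run from b to c over w and step r_sink c d, then there exists a state c' with step r_sink b c' and a run from c' to d over w; that is, the r_sink step can be shifted backwards across the entire intermediate sequence toward the beginning, preserving the initial and final states. -/

import Mathlib

/-- A run from `a` to `b` over a list of labels. -/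
inductive Run {σ Λ : Type*} (step : Λ → σ → σ → Prop) : σ → List Λ → σ → Prop
  | nil (a : σ) : Run step a [] a
  | cons {a c b : σ} {r : Λ} {l : List Λ} :
      step r a c → Run step c l b → Run step a (r :: l) b

/-- Labels `r` and `r'` are sequentially independent if two consecutive steps
`r` then `r'` can be reversed, preserving endpoints. -/
def SeqIndep {σ Λ : Type*} (step : Λ → σ → σ → Prop) (r r' : Λ) : Prop :=
  ∀ a b c : σ, step r a b → step r' b c → ∃ d : σ, step r' a d ∧ step r d c

/-- Backward shifting lemma: a step of `r_sink` can be shifted backwards across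
an entire intermediate sequence `w` of labels, each of which is sequentially
independent from `r_sink`, toward the beginning, preserving initial and final
states. -/
theorem shift_sink_backward {σ Λ : Type*} (step : Λ → σ → σ → Prop)
    (r_sink : Λ) (w : List Λ)
    (hindep : ∀ r ∈ w, SeqIndep step r r_sink)
    (b c d : σ) (hrun : Run step b w c) (hstep : step r_sink c d) :
    ∃ c' : σ, step r_sink b c' ∧ Run step c' w d := by
  induction hrun with
  | nil a => exact ⟨d, hstep, Run.nil d⟩
  | cons h hr ih =>
    rename_i a x e r l
    obtain ⟨c', hs, hr'⟩ := ih (fun r hr => hindep r (List.mem_cons_of_mem _ hr)) hstep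
    obtain ⟨d', h1, h2⟩ := hindep r List.mem_cons_self a x c' h hs
    exact ⟨d', h1, Run.cons h2 hr'⟩
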